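/- Let f ∈ L²₊(ℝ) be in the domain of X*, i.e. the restriction of its Fourier transform to (0,∞) lies in H¹(0,∞), and let X*f be defined on the Fourier side by (X*f)^(ξ) = i d/dξ f̂(ξ) for ξ > 0. Then X*f(x) = x f(x) + f̂(0⁺)/(2iπ) almost everywhere. -/

import Mathlib

open MeasureTheory Filter Set Topology Complex

noncomputable section

/-- Let `f ∈ L²₊(ℝ)` belong to the domain of `X*`: its Fourier transform `g`
(in the convention `f(x) = (1/2π) ∫₀^∞ e^{ixξ} g(ξ) dξ`, with `g` supported in
`[0,∞)`) restricted to `(0,∞)` lies in `H¹(0,∞)`, with derivative `g'` and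
trace `Ival = g(0⁺)`.  Let `h = X* f` be defined on the Fourier side by
`ĥ(ξ) = i g'(ξ)` for `ξ > 0`.  Then `X* f (x) = x f(x) + g(0⁺)/(2iπ)`
almost everywhere. -/
theorem Xstar_eq_mul_add_trace
    (f g g' h : ℝ → ℂ) (Ival : ℂ)
    (hf2 : MemLp f 2 (volume : Measure ℝ))
    (hg_deriv : ∀ ξ ∈ Ioi (0 : ℝ), HasDerivAt g (g' ξ) ξ)
    (hg_L2 : MemLp g 2 (volume.restrict (Ioi (0 : ℝ))))
    (hg'_L2 : MemLp g' 2 (volume.restrict (Ioi (0 : ℝ))))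
    (hg_L1 : IntegrableOn g (Ioi (0 : ℝ)))
    (hg'_L1 : IntegrableOn g' (Ioi (0 : ℝ)))
    (htrace : Tendsto g (𝓝[>] (0 : ℝ)) (𝓝 Ival))
    (hg_top : Tendsto g atTop (𝓝 0))
    (hf_inv : ∀ x : ℝ, f x =
      (1 / (2 * Real.pi) : ℂ) * ∫ ξ in Ioi (0 : ℝ), Complex.exp (Complex.I * x * ξ) * g ξ)
    (hh2 : MemLp h 2 (volume : Measure ℝ))
    (hh_inv : ∀ x : ℝ, h x =
      (1 / (2 * Real.pi) : ℂ) *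
        ∫ ξ in Ioi (0 : ℝ), Complex.exp (Complex.I * x * ξ) * (Complex.I * g' ξ)) :
    ∀ᵐ x : ℝ, h x = (x : ℂ) * f x + Ival / (2 * Complex.I * Real.pi) := by
  apply Filter.Eventually.of_forall
  intro x
  -- notation
  set E : ℝ → ℂ := fun ξ => Complex.exp (Complex.I * x * ξ) with hE
  have hEnorm : ∀ ξ : ℝ, ‖E ξ‖ = 1 := by
    intro ξ
    simp [hE, Complex.norm_exp]
  have hEmeas : AEStronglyMeasurable E (volume.restrict (Ioi (0:ℝ))) := by
    apply Continuous.aestronglyMeasurable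
    exact Complex.continuous_exp.comp (by continuity)
  -- derivative of E
  have hEderiv : ∀ ξ : ℝ, HasDerivAt E (Complex.I * x * E ξ) ξ := by
    intro ξ
    have h1 : HasDerivAt (fun z : ℂ => Complex.exp (Complex.I * x * z))
        (Complex.I * x * Complex.exp (Complex.I * x * ξ)) (ξ : ℂ) := by
      simpa [mul_comm] using ((hasDerivAt_id (ξ:ℂ)).const_mul (Complex.I * x)).cexp
    simpa using h1.comp_ofReal
  -- patched function for integration by parts
  set G : ℝ → ℂ := fun ξ => if ξ ≤ 0 then Ival else E ξ * g ξ with hG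
  set G' : ℝ → ℂ := fun ξ => E ξ * g' ξ + Complex.I * x * (E ξ * g ξ) with hG'
  have hGeq : ∀ ξ ∈ Ioi (0:ℝ), G ξ = E ξ * g ξ := by
    intro ξ hξ; simp [hG, not_le.mpr hξ.out]
  have hGderiv : ∀ ξ ∈ Ioi (0:ℝ), HasDerivAt G (G' ξ) ξ := by
    intro ξ hξ
    have hF : HasDerivAt (fun ξ => E ξ * g ξ)
        (Complex.I * x * E ξ * g ξ + E ξ * g' ξ) ξ := (hEderiv ξ).mul (hg_deriv ξ hξ)
    have hF2 : HasDerivAt (fun ξ => E ξ * g ξ) (G' ξ) ξ := by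
      convert hF using 1
      simp only [hG']; ring
    apply hF2.congr_of_eventuallyEq
    filter_upwards [Ioi_mem_nhds hξ.out] with y hy
    exact hGeq y hy
  -- integrability of G'
  have hInt1 : IntegrableOn (fun ξ => E ξ * g' ξ) (Ioi (0:ℝ)) := by
    apply hg'_L1.bdd_mul hEmeas (Eventually.of_forall fun ξ => (hEnorm ξ).le)
  have hInt2 : IntegrableOn (fun ξ => E ξ * g ξ) (Ioi (0:ℝ)) := by
    apply hg_L1.bdd_mul hEmeas (Eventually.of_forall fun ξ => (hEnorm ξ).le)
  have hG'int : IntegrableOn G' (Ioi (0:ℝ)) :=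
    hInt1.add (hInt2.const_mul _)
  -- continuity of G at 0 within Ici
  have hGcont : ContinuousWithinAt G (Ici (0:ℝ)) 0 := by
    have hIci : Ici (0:ℝ) = insert 0 (Ioi 0) := Ioi_insert.symm
    rw [hIci, continuousWithinAt_insert_self]
    have hG0 : G 0 = Ival := by simp [hG]
    unfold ContinuousWithinAt
    rw [hG0]
    have hEtend : Tendsto E (𝓝[>] (0:ℝ)) (𝓝 1) := by
      have : Tendsto E (𝓝 (0:ℝ)) (𝓝 (E 0)) :=
        (hEderiv 0).continuousAt.tendsto
      simpa [hE] using this.mono_left nhdsWithin_le_nhds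
    have := hEtend.mul htrace
    rw [one_mul] at this
    apply this.congr'
    filter_upwards [self_mem_nhdsWithin] with ξ hξ
    exact (hGeq ξ hξ).symm
  -- limit of G at infinity
  have hGtop : Tendsto G atTop (𝓝 0) := by
    have hnorm : Tendsto (fun ξ => ‖G ξ‖) atTop (𝓝 0) := by
      have h1 : Tendsto (fun ξ => ‖g ξ‖) atTop (𝓝 0) := by
        simpa using hg_top.norm
      apply h1.congr'
      filter_upwards [Ioi_mem_atTop (0:ℝ)] with ξ hξ
      rw [hGeq ξ hξ, norm_mul, hEnorm, one_mul]
    exact tendsto_zero_iff_norm_tendsto_zero.mpr hnorm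
  -- integration by parts identity
  have hFTC : ∫ ξ in Ioi (0:ℝ), G' ξ = 0 - Ival := by
    have := integral_Ioi_of_hasDerivAt_of_tendsto hGcont hGderiv hG'int hGtop
    simpa [hG] using this
  have hsplit : (∫ ξ in Ioi (0:ℝ), E ξ * g' ξ)
      + Complex.I * x * (∫ ξ in Ioi (0:ℝ), E ξ * g ξ) = -Ival := by
    have hadd : (∫ ξ in Ioi (0:ℝ), (E ξ * g' ξ + Complex.I * x * (E ξ * g ξ)))
        = (∫ ξ in Ioi (0:ℝ), E ξ * g' ξ)
          + ∫ ξ in Ioi (0:ℝ), Complex.I * x * (E ξ * g ξ) :=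
      integral_add hInt1 (hInt2.const_mul _)
    simp only [hG'] at hFTC
    rw [hadd, integral_const_mul] at hFTC
    linear_combination hFTC
  -- finish
  have hh := hh_inv x
  have hf := hf_inv x
  have hint_eq : (∫ ξ in Ioi (0:ℝ), E ξ * (Complex.I * g' ξ))
      = Complex.I * ∫ ξ in Ioi (0:ℝ), E ξ * g' ξ := by
    rw [← integral_const_mul]
    congr 1; funext ξ; ring
  rw [hint_eq] at hh
  have hIoi : (∫ ξ in Ioi (0:ℝ), E ξ * g' ξ)
      = -Ival - Complex.I * x * (∫ ξ in Ioi (0:ℝ), E ξ * g ξ) := by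
    linear_combination hsplit
  rw [hIoi] at hh
  have hπ : (Real.pi : ℂ) ≠ 0 := by
    exact_mod_cast Real.pi_ne_zero
  rw [hh, hf]
  simp only [hE]
  set B : ℂ := ∫ ξ in Ioi (0:ℝ), Complex.exp (Complex.I * x * ξ) * g ξ with hB
  have h1 : (2 * Complex.I * (Real.pi:ℂ)) ≠ 0 := by
    simp [Complex.I_ne_zero, hπ]
  have h2 : (2 * (Real.pi:ℂ)) ≠ 0 := by simp [hπ]
  have hrw : Ival / (2 * Complex.I * (Real.pi:ℂ))
      = -Complex.I * Ival / (2 * (Real.pi:ℂ)) := by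
    rw [div_eq_div_iff h1 h2]
    linear_combination (2 * Ival * (Real.pi:ℂ)) * Complex.I_sq
  rw [hrw]
  linear_combination (-(x : ℂ) * B / (2 * (Real.pi : ℂ))) * Complex.I_sq
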